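/- Let A be a unital *-algebra over ℂ, q a C*-seminorm on A, D a C*-algebra, E a Hilbert C*-module over D, and (𝒟, π) a representation of A on E. For a fixed ξ ∈ 𝒟, the following are equivalent: (1) there is C > 0 with ‖⟪ξ, π(a)ξ⟫‖ ≤ C·q(a) for all a ∈ A; (2) there is C > 0 with ‖π(a)ξ‖ ≤ C·q(a) for all a ∈ A; (3) ‖π(a)ξ‖ ≤ ‖ξ‖·q(a) for all a ∈ A. Moreover, the set of all ξ ∈ 𝒟 with these equivalent properties is a sub-A-D-bimodule of 𝒟: it is a ℂ-linear subspace closed under the D-module action and under π(a) for every a ∈ A. -/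

import Mathlib

open scoped RightActions

/-- The class `CStarModule` as it stood in Mathlib of December 2024 (right `A`-action via
`SMul Aᵐᵒᵖ E`), restated here because Mathlib's `CStarModule` has since changed meaning. -/
class OldCStarModule (A E : Type*) [NonUnitalSemiring A] [StarRing A]
    [Module ℂ A] [AddCommGroup E] [Module ℂ E] [PartialOrder A] [SMul Aᵐᵒᵖ E] [Norm A] [Norm E]
    extends Inner A E where
  inner_add_right {x} {y} {z} : inner x (y + z) = inner x y + inner x z
  inner_self_nonneg {x} : 0 ≤ inner x x
  inner_self {x} : inner x x = 0 ↔ x = 0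
  inner_op_smul_right {a : A} {x y : E} : inner x (y <• a) = inner x y * a
  inner_smul_right_complex {z : ℂ} {x} {y} : inner x (z • y) = z • inner x y
  star_inner x y : star (inner x y) = inner y x
  norm_eq_sqrt_norm_inner_self x : ‖x‖ = Real.sqrt ‖inner x x‖

variable (A : Type*) [Ring A] [Algebra ℂ A] [StarRing A] [StarModule ℂ A]
variable (D : Type*) [NonUnitalNormedRing D] [StarRing D] [CStarRing D] [PartialOrder D]
  [StarOrderedRing D] [NormedSpace ℂ D] [IsScalarTower ℂ D D] [SMulCommClass ℂ D D]
  [StarModule ℂ D] [CompleteSpace D]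
variable (E : Type*) [NormedAddCommGroup E] [NormedSpace ℂ E] [SMul Dᵐᵒᵖ E] [OldCStarModule D E]
  [CompleteSpace E]

/-- A representation of a unital `⋆`-algebra `A` on a Hilbert C*-module `E` over a C*-algebra
`D`: a dense `D`-submodule `dom ⊆ E` together with a unital algebra homomorphism `π` from `A`
into the `D`-module endomorphisms of `dom` satisfying `⟪π a ξ, η⟫ = ⟪ξ, π (star a) η⟫` for the
`D`-valued inner product. -/
structure ModuleRep where
  dom : Submodule ℂ E
  smul_mem' : ∀ (d : D) {x : E}, x ∈ dom → x <• d ∈ dom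
  dense : Dense (dom : Set E)
  π : A → (dom →ₗ[ℂ] dom)
  π_one : π 1 = LinearMap.id
  π_mul : ∀ a b : A, π (a * b) = (π a).comp (π b)
  π_add : ∀ a b : A, π (a + b) = π a + π b
  π_smul : ∀ (c : ℂ) (a : A), π (c • a) = c • π a
  π_smulD : ∀ (a : A) (d : D) (x : dom),
    ((π a ⟨(x : E) <• d, smul_mem' d x.2⟩ : dom) : E) = ((π a x : dom) : E) <• d
  π_star : ∀ (a : A) (ξ η : dom),
    (inner D ((π a ξ : dom) : E) ((η : dom) : E) : D) = inner D ((ξ : dom) : E) ((π (star a) η : dom) : E)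

variable {A D E}

/-- `ξ` is a `q`-bounded vector for the representation `ρ`:
`‖π a ξ‖ ≤ ‖ξ‖ * q a` for all `a ∈ A`. -/
def IsBoundedVec (ρ : ModuleRep A D E) (q : A → ℝ) (ξ : ρ.dom) : Prop :=
  ∀ a : A, ‖((ρ.π a ξ : ρ.dom) : E)‖ ≤ ‖((ξ : ρ.dom) : E)‖ * q a

/-- A bundled non-unital C*-algebra structure assembled from the unbundled instances. -/
@[reducible]
def auxNonUnitalCStarAlgebra : NonUnitalCStarAlgebra D :=
  { toNonUnitalNormedRing := ‹NonUnitalNormedRing D›, toStarRing := ‹StarRing D›,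
    toCompleteSpace := ‹CompleteSpace D›, toCStarRing := ‹CStarRing D›,
    toNormedSpace := ‹NormedSpace ℂ D›, toIsScalarTower := ‹IsScalarTower ℂ D D›,
    toSMulCommClass := ‹SMulCommClass ℂ D D›, toStarModule := ‹StarModule ℂ D› }

lemma old_norm_sq_eq (x : E) : ‖x‖ ^ 2 = ‖inner D x x‖ := by
  rw [OldCStarModule.norm_eq_sqrt_norm_inner_self (A := D) x, Real.sq_sqrt (norm_nonneg _)]

lemma old_inner_sub_right (x y z : E) : inner D x (y - z) = inner D x y - inner D x z := by
  have h : inner D x y = inner D x (y - z) + inner D x z := by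
    rw [← OldCStarModule.inner_add_right, sub_add_cancel]
  rw [h, add_sub_cancel_right]

lemma old_inner_sub_left (x y z : E) : inner D (x - y) z = inner D x z - inner D y z := by
  rw [← OldCStarModule.star_inner z (x - y), old_inner_sub_right, star_sub,
    OldCStarModule.star_inner, OldCStarModule.star_inner]

lemma old_inner_op_smul_left (x y : E) (a : D) : inner D (x <• a) y = star a * inner D x y := by
  rw [← OldCStarModule.star_inner y (x <• a), OldCStarModule.inner_op_smul_right, star_mul,
    OldCStarModule.star_inner]

lemma old_inner_smul_right_real (x y : E) (r : ℝ) : inner D x (r • y) = r • inner D x y := by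
  rw [RCLike.real_smul_eq_coe_smul (K := ℂ) r y, OldCStarModule.inner_smul_right_complex,
    ← RCLike.real_smul_eq_coe_smul (K := ℂ)]

lemma old_inner_smul_left_real (x y : E) (r : ℝ) : inner D (r • x) y = r • inner D x y := by
  rw [← OldCStarModule.star_inner y (r • x), old_inner_smul_right_real, star_smul,
    OldCStarModule.star_inner, star_trivial]

lemma old_inner_zero_right (x : E) : inner D x (0 : E) = 0 := by
  have h := old_inner_sub_right (D := D) x 0 0
  rw [sub_zero, sub_self] at h
  exact h

lemma old_inner_mul_inner_swap_le (x y : E) :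
    inner D y x * inner D x y ≤ ‖x‖ ^ 2 • inner D y y := by
  letI : NonUnitalCStarAlgebra D := auxNonUnitalCStarAlgebra (D := D)
  have hY : 0 ≤ inner D y y := OldCStarModule.inner_self_nonneg
  rcases eq_or_ne x 0 with h | h
  · rw [h, old_inner_zero_right, zero_mul]
    exact smul_nonneg (sq_nonneg _) hY
  · have hr : 0 < ‖x‖ ^ 2 := by
      rw [old_norm_sq_eq (D := D)]
      exact norm_pos_iff.mpr (mt OldCStarModule.inner_self.mp h)
    set r : ℝ := ‖x‖ ^ 2 with hrdef
    set a : D := inner D x y with hadef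
    have ha : star a = inner D y x := OldCStarModule.star_inner x y
    have h1 : (0 : D) ≤ inner D (x <• a - r • y) (x <• a - r • y) :=
      OldCStarModule.inner_self_nonneg
    have h2 : inner D (x <• a - r • y) (x <• a - r • y) =
        star a * inner D x x * a - r • (star a * a) - r • (star a * a)
          + r • r • inner D y y := by
      rw [old_inner_sub_left, old_inner_sub_right, old_inner_sub_right,
        old_inner_op_smul_left, old_inner_op_smul_left, OldCStarModule.inner_op_smul_right,
        OldCStarModule.inner_op_smul_right, old_inner_smul_right_real,
        old_inner_smul_right_real, old_inner_smul_left_real, old_inner_smul_left_real]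
      simp only [← hadef, ← ha, mul_smul_comm, smul_mul_assoc, mul_assoc]
      abel
    have h3 : star a * inner D x x * a ≤ r • (star a * a) := by
      have := CStarAlgebra.star_left_conjugate_le_norm_smul (a := a) (b := inner D x x)
        (OldCStarModule.star_inner x x)
      rwa [← old_norm_sq_eq (D := D)] at this
    have h4 : (0 : D) ≤ r • (r • inner D y y - star a * a) := by
      have e : r • (r • inner D y y - star a * a) =
          (star a * inner D x x * a - r • (star a * a) - r • (star a * a)
            + r • r • inner D y y) + (r • (star a * a) - star a * inner D x x * a) := by
        rw [smul_sub]; abel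
      rw [e, ← h2]
      exact add_nonneg h1 (sub_nonneg.mpr h3)
    have h5 : (0 : D) ≤ r • inner D y y - star a * a := by
      have := smul_nonneg (inv_nonneg.mpr hr.le) h4
      rwa [smul_smul, inv_mul_cancel₀ hr.ne', one_smul] at this
    rw [← ha]
    exact sub_nonneg.mp h5

lemma old_norm_inner_le (x y : E) : ‖inner D x y‖ ≤ ‖x‖ * ‖y‖ := by
  letI : NonUnitalCStarAlgebra D := auxNonUnitalCStarAlgebra (D := D)
  have : ‖inner D x y‖ ^ 2 ≤ (‖x‖ * ‖y‖) ^ 2 := calc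
    ‖inner D x y‖ ^ 2 = ‖star (inner D x y) * inner D x y‖ := by
        rw [CStarRing.norm_star_mul_self, pow_two]
    _ = ‖inner D y x * inner D x y‖ := by rw [OldCStarModule.star_inner]
    _ ≤ ‖‖x‖ ^ 2 • inner D y y‖ := CStarAlgebra.norm_le_norm_of_nonneg_of_le
        (by rw [← OldCStarModule.star_inner x y]; exact star_mul_self_nonneg _)
        (old_inner_mul_inner_swap_le x y)
    _ = ‖x‖ ^ 2 * ‖inner D y y‖ := by rw [norm_smul, Real.norm_of_nonneg (sq_nonneg _)]
    _ = (‖x‖ * ‖y‖) ^ 2 := by rw [← old_norm_sq_eq (D := D) y]; ring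
  exact (pow_le_pow_iff_left₀ (norm_nonneg _) (by positivity) two_ne_zero).mp this

/-- The norm on a Hilbert C*-module is submultiplicative for the right `D`-action. -/
lemma aux_norm_opSmul (x : E) (d : D) : ‖x <• d‖ ≤ ‖x‖ * ‖d‖ := by
  letI : NonUnitalCStarAlgebra D := auxNonUnitalCStarAlgebra (D := D)
  have h1 : ‖x <• d‖ ^ 2 = ‖star d * ((inner D x x : D) * d)‖ := by
    rw [old_norm_sq_eq (D := D), OldCStarModule.inner_op_smul_right,
      old_inner_op_smul_left, mul_assoc]
  have h3 : ‖x <• d‖ ^ 2 ≤ (‖x‖ * ‖d‖) ^ 2 := by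
    rw [h1]
    calc ‖star d * ((inner D x x : D) * d)‖ ≤ ‖star d‖ * ‖(inner D x x : D) * d‖ := norm_mul_le _ _
      _ ≤ ‖star d‖ * (‖(inner D x x : D)‖ * ‖d‖) := by gcongr; exact norm_mul_le _ _
      _ = ‖(inner D x x : D)‖ * ‖d‖ ^ 2 := by rw [norm_star]; ring
      _ = (‖x‖ * ‖d‖) ^ 2 := by rw [← old_norm_sq_eq (D := D)]; ring
  exact (pow_le_pow_iff_left₀ (norm_nonneg _) (by positivity) two_ne_zero).mp h3

/-- Iterated `b ↦ star b * b`, starting from `star a * a`. -/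
def iterStar {A : Type*} [Mul A] [Star A] (a : A) : ℕ → A
  | 0 => star a * a
  | n + 1 => star (iterStar a n) * iterStar a n

/-- The key implication: a bound `‖⟪ξ, π a ξ⟫‖ ≤ C * q a` for some `C > 0` implies the sharp
bound `‖π a ξ‖ ≤ ‖ξ‖ * q a`. -/
lemma aux_key (ρ : ModuleRep A D E) (q : A → ℝ)
    (hq_nonneg : ∀ a : A, 0 ≤ q a)
    (hq_cstar : ∀ a : A, q (star a * a) = q a ^ 2)
    (ξ : ρ.dom) (C : ℝ) (hC : 0 < C)
    (h : ∀ a : A, ‖(inner D ((ξ : ρ.dom) : E) ((ρ.π a ξ : ρ.dom) : E) : D)‖ ≤ C * q a) :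
    IsBoundedVec ρ q ξ := by
  letI : NonUnitalCStarAlgebra D := auxNonUnitalCStarAlgebra (D := D)
  intro a
  by_cases hz : ((ξ : ρ.dom) : E) = 0
  · have hξ0 : ξ = 0 := Subtype.ext hz
    have h0 : ρ.π a ξ = 0 := by rw [hξ0, map_zero]
    simp [h0, hz]
  · have hN : 0 < ‖((ξ : ρ.dom) : E)‖ := norm_pos_iff.mpr hz
    set N : ℝ := ‖((ξ : ρ.dom) : E)‖ with hNdef
    set f : A → ℝ := fun b => ‖(inner D ((ξ : ρ.dom) : E) ((ρ.π b ξ : ρ.dom) : E) : D)‖ with hf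
    have hf_nonneg : ∀ b, 0 ≤ f b := fun b => norm_nonneg _
    have stepA : ∀ b : A, ‖((ρ.π b ξ : ρ.dom) : E)‖ ^ 2 = f (star b * b) := by
      intro b
      have h2 : ρ.π (star b * b) ξ = ρ.π (star b) (ρ.π b ξ) := by rw [ρ.π_mul]; rfl
      rw [old_norm_sq_eq (D := D), ρ.π_star b ξ (ρ.π b ξ), ← h2]
    have stepB : ∀ b : A, f b ^ 2 ≤ N ^ 2 * f (star b * b) := by
      intro b
      have h1 : f b ≤ N * ‖((ρ.π b ξ : ρ.dom) : E)‖ := old_norm_inner_le _ _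
      calc f b ^ 2 ≤ (N * ‖((ρ.π b ξ : ρ.dom) : E)‖) ^ 2 :=
            pow_le_pow_left₀ (hf_nonneg b) h1 2
        _ = N ^ 2 * ‖((ρ.π b ξ : ρ.dom) : E)‖ ^ 2 := by ring
        _ = N ^ 2 * f (star b * b) := by rw [stepA b]
    have hq_iter : ∀ n : ℕ, q (iterStar a n) = q a ^ (2 ^ (n + 1)) := by
      intro n
      induction n with
      | zero => simpa [iterStar] using hq_cstar a
      | succ n ih =>
        show q (star (iterStar a n) * iterStar a n) = _
        rw [hq_cstar, ih, ← pow_mul, ← pow_succ]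
    have hf_iter : ∀ n : ℕ, f (iterStar a n) ≤ C * q a ^ (2 ^ (n + 1)) := fun n =>
      (h _).trans_eq (by rw [hq_iter n])
    set X : ℝ := ‖((ρ.π a ξ : ρ.dom) : E)‖ with hX
    have hX_nonneg : 0 ≤ X := norm_nonneg _
    have main : ∀ n : ℕ, X ^ (2 ^ (n + 1)) * N ^ 2 ≤ N ^ (2 ^ (n + 1)) * f (iterStar a n) := by
      intro n
      induction n with
      | zero =>
        have h20 : (2 : ℕ) ^ (0 + 1) = 2 := rfl
        rw [h20, stepA a]
        exact le_of_eq (by rw [show iterStar a 0 = star a * a from rfl]; ring)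
      | succ n ih =>
        have hm : (2 : ℕ) ^ (n + 1 + 1) = 2 ^ (n + 1) * 2 := pow_succ 2 (n + 1)
        rw [hm, pow_mul, pow_mul]
        have hsq : (X ^ (2 ^ (n + 1)) * N ^ 2) ^ 2 ≤ (N ^ (2 ^ (n + 1)) * f (iterStar a n)) ^ 2 :=
          pow_le_pow_left₀ (by positivity) ih 2
        have hB : f (iterStar a n) ^ 2 ≤ N ^ 2 * f (star (iterStar a n) * iterStar a n) :=
          stepB _
        have hfiter : iterStar a (n + 1) = star (iterStar a n) * iterStar a n := rfl
        have key2 : ((X ^ (2 ^ (n + 1))) ^ 2 * N ^ 2) * N ^ 2 ≤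
            ((N ^ (2 ^ (n + 1))) ^ 2 * f (iterStar a (n + 1))) * N ^ 2 := by
          calc ((X ^ (2 ^ (n + 1))) ^ 2 * N ^ 2) * N ^ 2
              = (X ^ (2 ^ (n + 1)) * N ^ 2) ^ 2 := by ring
            _ ≤ (N ^ (2 ^ (n + 1)) * f (iterStar a n)) ^ 2 := hsq
            _ = (N ^ (2 ^ (n + 1))) ^ 2 * f (iterStar a n) ^ 2 := by ring
            _ ≤ (N ^ (2 ^ (n + 1))) ^ 2 *
                (N ^ 2 * f (star (iterStar a n) * iterStar a n)) :=
              mul_le_mul_of_nonneg_left hB (by positivity)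
            _ = ((N ^ (2 ^ (n + 1))) ^ 2 * f (iterStar a (n + 1))) * N ^ 2 := by
              rw [hfiter]; ring
        exact le_of_mul_le_mul_right key2 (by positivity)
    have final : ∀ n : ℕ, X ^ (2 ^ (n + 1)) * N ^ 2 ≤ C * (N * q a) ^ (2 ^ (n + 1)) := by
      intro n
      calc X ^ (2 ^ (n + 1)) * N ^ 2 ≤ N ^ (2 ^ (n + 1)) * f (iterStar a n) := main n
        _ ≤ N ^ (2 ^ (n + 1)) * (C * q a ^ (2 ^ (n + 1))) :=
          mul_le_mul_of_nonneg_left (hf_iter n) (by positivity)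
        _ = C * (N * q a) ^ (2 ^ (n + 1)) := by rw [mul_pow]; ring
    -- conclude `X ≤ N * q a`
    show X ≤ N * q a
    by_contra hcon
    push_neg at hcon
    have hY_nonneg : 0 ≤ N * q a := mul_nonneg hN.le (hq_nonneg a)
    have hXpos : 0 < X := lt_of_le_of_lt hY_nonneg hcon
    rcases hY_nonneg.eq_or_lt with hY0 | hYpos
    · have h2 := final 0
      rw [← hY0] at h2
      have h3 : (0 : ℝ) ^ (2 ^ (0 + 1)) = 0 := by norm_num
      rw [h3, mul_zero] at h2
      have h5 : 0 < X ^ (2 ^ (0 + 1)) * N ^ 2 := by positivity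
      linarith
    · have hr : 1 < X / (N * q a) := (one_lt_div hYpos).mpr hcon
      obtain ⟨k, hk⟩ := pow_unbounded_of_one_lt (C / N ^ 2) hr
      have hkm : k ≤ 2 ^ (k + 1) :=
        le_of_lt (lt_of_lt_of_le (Nat.lt_two_pow_self (n := k))
          (Nat.pow_le_pow_right (by norm_num) (Nat.le_succ k)))
      have h3 : (X / (N * q a)) ^ (2 ^ (k + 1)) ≤ C / N ^ 2 := by
        rw [div_pow, div_le_div_iff₀ (by positivity) (by positivity)]
        calc X ^ (2 ^ (k + 1)) * N ^ 2 ≤ C * (N * q a) ^ (2 ^ (k + 1)) := final k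
          _ = C * (N * q a) ^ (2 ^ (k + 1)) := rfl
      have h4 : (X / (N * q a)) ^ k ≤ (X / (N * q a)) ^ (2 ^ (k + 1)) :=
        pow_le_pow_right₀ hr.le hkm
      linarith

/-- Let `q` be a C*-seminorm on the unital `⋆`-algebra `A` and `(𝒟, π)` a representation of `A`
on a Hilbert C*-module `E` over `D`.  For `ξ ∈ 𝒟` the following are equivalent:
(1) `‖⟪ξ, π a ξ⟫‖ ≤ C * q a` for some `C > 0`; (2) `‖π a ξ‖ ≤ C * q a` for some `C > 0`;
(3) `‖π a ξ‖ ≤ ‖ξ‖ * q a`.  Moreover the set of such vectors is a sub-`A`-`D`-bimodule of `𝒟`: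
a `ℂ`-linear subspace closed under the `D`-action and under every `π a`. -/
theorem boundedVec_tfae_and_submodule (ρ : ModuleRep A D E) (q : A → ℝ)
    (hq_nonneg : ∀ a : A, 0 ≤ q a)
    (hq_smul : ∀ (c : ℂ) (a : A), q (c • a) = ‖c‖ * q a)
    (hq_add : ∀ a b : A, q (a + b) ≤ q a + q b)
    (hq_mul : ∀ a b : A, q (a * b) ≤ q a * q b)
    (hq_cstar : ∀ a : A, q (star a * a) = q a ^ 2) :
    (∀ ξ : ρ.dom,
      ((∃ C > (0 : ℝ), ∀ a : A,
          ‖(inner D ((ξ : ρ.dom) : E) ((ρ.π a ξ : ρ.dom) : E) : D)‖ ≤ C * q a) ↔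
        (∃ C > (0 : ℝ), ∀ a : A, ‖((ρ.π a ξ : ρ.dom) : E)‖ ≤ C * q a)) ∧
      ((∃ C > (0 : ℝ), ∀ a : A, ‖((ρ.π a ξ : ρ.dom) : E)‖ ≤ C * q a) ↔
        IsBoundedVec ρ q ξ)) ∧
    -- the set of bounded vectors is a sub-`A`-`D`-bimodule of `𝒟`:
    IsBoundedVec ρ q (0 : ρ.dom) ∧
    (∀ ξ η : ρ.dom, IsBoundedVec ρ q ξ → IsBoundedVec ρ q η → IsBoundedVec ρ q (ξ + η)) ∧
    (∀ (c : ℂ) (ξ : ρ.dom), IsBoundedVec ρ q ξ → IsBoundedVec ρ q (c • ξ)) ∧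
    (∀ (d : D) (ξ : ρ.dom), IsBoundedVec ρ q ξ →
      IsBoundedVec ρ q ⟨(ξ : E) <• d, ρ.smul_mem' d ξ.2⟩) ∧
    (∀ (a : A) (ξ : ρ.dom), IsBoundedVec ρ q ξ → IsBoundedVec ρ q (ρ.π a ξ)) := by
  letI : NonUnitalCStarAlgebra D := auxNonUnitalCStarAlgebra (D := D)
  have bdd_of_one : ∀ ξ : ρ.dom,
      (∃ C > (0 : ℝ), ∀ a : A,
        ‖(inner D ((ξ : ρ.dom) : E) ((ρ.π a ξ : ρ.dom) : E) : D)‖ ≤ C * q a) →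
      IsBoundedVec ρ q ξ := by
    rintro ξ ⟨C, hC, hb⟩
    exact aux_key ρ q hq_nonneg hq_cstar ξ C hC hb
  have one_of_two : ∀ ξ : ρ.dom,
      (∃ C > (0 : ℝ), ∀ a : A, ‖((ρ.π a ξ : ρ.dom) : E)‖ ≤ C * q a) →
      (∃ C > (0 : ℝ), ∀ a : A,
        ‖(inner D ((ξ : ρ.dom) : E) ((ρ.π a ξ : ρ.dom) : E) : D)‖ ≤ C * q a) := by
    rintro ξ ⟨C, hC, hb⟩
    refine ⟨C * (‖((ξ : ρ.dom) : E)‖ + 1), by positivity, fun a => ?_⟩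
    calc ‖(inner D ((ξ : ρ.dom) : E) ((ρ.π a ξ : ρ.dom) : E) : D)‖
        ≤ ‖((ξ : ρ.dom) : E)‖ * ‖((ρ.π a ξ : ρ.dom) : E)‖ := old_norm_inner_le _ _
      _ ≤ ‖((ξ : ρ.dom) : E)‖ * (C * q a) :=
        mul_le_mul_of_nonneg_left (hb a) (norm_nonneg _)
      _ ≤ (C * (‖((ξ : ρ.dom) : E)‖ + 1)) * q a := by
        nlinarith [hq_nonneg a, norm_nonneg ((ξ : ρ.dom) : E)]
  have two_of_bdd : ∀ ξ : ρ.dom, IsBoundedVec ρ q ξ →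
      (∃ C > (0 : ℝ), ∀ a : A, ‖((ρ.π a ξ : ρ.dom) : E)‖ ≤ C * q a) := by
    intro ξ hb
    refine ⟨‖((ξ : ρ.dom) : E)‖ + 1, by positivity, fun a => (hb a).trans ?_⟩
    exact mul_le_mul_of_nonneg_right (by linarith [norm_nonneg ((ξ : ρ.dom) : E)])
      (hq_nonneg a)
  have bdd_of_two : ∀ ξ : ρ.dom,
      (∃ C > (0 : ℝ), ∀ a : A, ‖((ρ.π a ξ : ρ.dom) : E)‖ ≤ C * q a) →
      IsBoundedVec ρ q ξ := fun ξ h => bdd_of_one ξ (one_of_two ξ h)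
  refine ⟨fun ξ => ⟨⟨fun h1 => two_of_bdd ξ (bdd_of_one ξ h1), one_of_two ξ⟩,
      ⟨bdd_of_two ξ, two_of_bdd ξ⟩⟩, ?_, ?_, ?_, ?_, ?_⟩
  · -- zero
    intro a
    simp [map_zero]
  · -- addition
    intro ξ η hξ hη
    apply bdd_of_two
    refine ⟨‖((ξ : ρ.dom) : E)‖ + ‖((η : ρ.dom) : E)‖ + 1, by positivity, fun a => ?_⟩
    have hcoe : ((ρ.π a (ξ + η) : ρ.dom) : E) =
        ((ρ.π a ξ : ρ.dom) : E) + ((ρ.π a η : ρ.dom) : E) := by rw [map_add]; rfl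
    rw [hcoe]
    calc ‖((ρ.π a ξ : ρ.dom) : E) + ((ρ.π a η : ρ.dom) : E)‖
        ≤ ‖((ρ.π a ξ : ρ.dom) : E)‖ + ‖((ρ.π a η : ρ.dom) : E)‖ := norm_add_le _ _
      _ ≤ ‖((ξ : ρ.dom) : E)‖ * q a + ‖((η : ρ.dom) : E)‖ * q a := add_le_add (hξ a) (hη a)
      _ ≤ (‖((ξ : ρ.dom) : E)‖ + ‖((η : ρ.dom) : E)‖ + 1) * q a := by
        nlinarith [hq_nonneg a]
  · -- complex scalar action
    intro c ξ hξ a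
    have hcoe : ((ρ.π a (c • ξ) : ρ.dom) : E) = c • ((ρ.π a ξ : ρ.dom) : E) := by
      rw [map_smul]; rfl
    have hcoe2 : (((c • ξ : ρ.dom)) : E) = c • ((ξ : ρ.dom) : E) := rfl
    rw [hcoe, hcoe2, norm_smul, norm_smul, mul_assoc]
    exact mul_le_mul_of_nonneg_left (hξ a) (norm_nonneg c)
  · -- right D-action
    intro d ξ hξ
    apply bdd_of_two
    refine ⟨‖((ξ : ρ.dom) : E)‖ * ‖d‖ + 1, ?_, fun a => ?_⟩
    · have := mul_nonneg (norm_nonneg ((ξ : ρ.dom) : E)) (norm_nonneg d); linarith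
    · rw [ρ.π_smulD a d ξ]
      calc ‖((ρ.π a ξ : ρ.dom) : E) <• d‖ ≤ ‖((ρ.π a ξ : ρ.dom) : E)‖ * ‖d‖ :=
            aux_norm_opSmul _ _
        _ ≤ (‖((ξ : ρ.dom) : E)‖ * q a) * ‖d‖ :=
          mul_le_mul_of_nonneg_right (hξ a) (norm_nonneg d)
        _ ≤ (‖((ξ : ρ.dom) : E)‖ * ‖d‖ + 1) * q a := by
          nlinarith [hq_nonneg a, norm_nonneg d, norm_nonneg ((ξ : ρ.dom) : E)]
  · -- action of A
    intro b ξ hξ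
    apply bdd_of_two
    refine ⟨‖((ξ : ρ.dom) : E)‖ * q b + 1, ?_, fun a => ?_⟩
    · have := mul_nonneg (norm_nonneg ((ξ : ρ.dom) : E)) (hq_nonneg b); linarith
    · have hcoe : ρ.π a (ρ.π b ξ) = ρ.π (a * b) ξ := by rw [ρ.π_mul]; rfl
      rw [hcoe]
      calc ‖((ρ.π (a * b) ξ : ρ.dom) : E)‖ ≤ ‖((ξ : ρ.dom) : E)‖ * q (a * b) := hξ (a * b)
        _ ≤ ‖((ξ : ρ.dom) : E)‖ * (q a * q b) :=
          mul_le_mul_of_nonneg_left (hq_mul a b) (norm_nonneg _)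
        _ ≤ (‖((ξ : ρ.dom) : E)‖ * q b + 1) * q a := by
          nlinarith [hq_nonneg a, hq_nonneg b, norm_nonneg ((ξ : ρ.dom) : E)]
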